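/- Let G be a simple graph with vertex set {1,…,n} and let F₁,…,F_k (1 ≤ k ≤ n) be pairwise disjoint forts of G, with incidence vectors v₁,…,v_k ∈ ℝⁿ (where the j-th entry of v_i is 1 if j ∈ F_i and 0 otherwise). Then there exists a real n×n matrix A such that for all i ≠ j, the (i,j) entry of A is nonzero if and only if {i,j} is an edge of G, and A v_i = 0 for i = 1,…,k. In particular, there is such a matrix A whose nullity is at least k, so the maximum nullity over all combinatorially symmetric real matrices whose graph is G is at least ft(G). -/

import Mathlib

open Finset

/-- A fort of a graph: a nonempty (finite) set of vertices `F` such that no vertex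
outside `F` has exactly one neighbor in `F`. -/
def IsFort {V : Type*} (G : SimpleGraph V) (F : Finset V) : Prop :=
  F.Nonempty ∧ ∀ v ∉ F, ¬ ∃! u, u ∈ F ∧ G.Adj v u

/-- The fort number: the maximum cardinality of a collection of pairwise disjoint forts. -/
noncomputable def fortNumber {V : Type*} (G : SimpleGraph V) : ℕ :=
  sSup {k | ∃ 𝒞 : Finset (Finset V), (∀ F ∈ 𝒞, IsFort G F) ∧
    (↑𝒞 : Set (Finset V)).Pairwise Disjoint ∧ 𝒞.card = k}

/-- The fractional zero forcing number. -/
noncomputable def fracZ {V : Type*} [Fintype V] (G : SimpleGraph V) : ℝ :=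
  sInf {x : ℝ | ∃ ω : V → ℝ, (∀ v, 0 ≤ ω v) ∧
    (∀ F : Finset V, IsFort G F → 1 ≤ ∑ v ∈ F, ω v) ∧ x = ∑ v, ω v}

/-- The set of vertices eventually filled by the zero forcing process started at `S`. -/
inductive ZFForced {V : Type*} (G : SimpleGraph V) (S : Set V) : V → Prop
  | init (v : V) : v ∈ S → ZFForced G S v
  | force (u w : V) : G.Adj u w → ZFForced G S u →
      (∀ x, G.Adj u x → x ≠ w → ZFForced G S x) → ZFForced G S w

/-- A zero forcing set: starting from `S`, every vertex is eventually filled. -/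
def IsZeroForcingSet {V : Type*} (G : SimpleGraph V) (S : Set V) : Prop :=
  ∀ v, ZFForced G S v

/-- The zero forcing number: minimum cardinality of a zero forcing set. -/
noncomputable def zfNumber {V : Type*} (G : SimpleGraph V) : ℕ :=
  sInf {k | ∃ S : Finset V, IsZeroForcingSet G ↑S ∧ S.card = k}


/-- neighbors of `v` inside the fort `F l` -/
noncomputable def nbr {n k : ℕ} (G : SimpleGraph (Fin n)) (F : Fin k → Finset (Fin n))
    (v : Fin n) (l : Fin k) : Finset (Fin n) :=
  @Finset.filter _ (G.Adj v) (Classical.decPred _) (F l)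

lemma mem_nbr {n k : ℕ} {G : SimpleGraph (Fin n)} {F : Fin k → Finset (Fin n)}
    {v j : Fin n} {l : Fin k} : j ∈ nbr G F v l ↔ j ∈ F l ∧ G.Adj v j := by
  simp [nbr, Finset.mem_filter]

open Classical in
noncomputable def myA {n k : ℕ} (G : SimpleGraph (Fin n)) (F : Fin k → Finset (Fin n)) :
    Matrix (Fin n) (Fin n) ℝ := fun v j =>
  if v = j then
    (if h : ∃ l, v ∈ F l then -(((nbr G F v h.choose).card : ℝ)) else 0)
  else if hadj : G.Adj v j then
    (if h : ∃ l, j ∈ F l ∧ v ∉ F l then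
       (if j = (nbr G F v h.choose).min'
            ⟨j, mem_nbr.mpr ⟨h.choose_spec.1, hadj⟩⟩ then
          -(((nbr G F v h.choose).card : ℝ) - 1) else 1)
     else 1)
  else 0

section Key
variable {n k : ℕ} {G : SimpleGraph (Fin n)} {F : Fin k → Finset (Fin n)}
variable (hfort : ∀ i, IsFort G (F i))
variable (hdisj : ∀ i j : Fin k, i ≠ j → Disjoint (F i) (F j))

include hdisj in
lemma fort_unique {j : Fin n} {l₁ l₂ : Fin k} (h1 : j ∈ F l₁) (h2 : j ∈ F l₂) : l₁ = l₂ := by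
  by_contra h
  exact (hdisj l₁ l₂ h).forall_ne_finset h1 h2 rfl

include hfort in
lemma card_two {v : Fin n} {l : Fin k} (hv : v ∉ F l)
    (hne : (nbr G F v l).Nonempty) : 2 ≤ (nbr G F v l).card := by
  rcases hne with ⟨u, hu⟩
  rcases Nat.lt_or_ge (nbr G F v l).card 2 with h | h
  · exfalso
    have hc : (nbr G F v l).card = 1 := by
      have : 1 ≤ (nbr G F v l).card := Finset.card_pos.mpr ⟨u, hu⟩
      omega
    rcases Finset.card_eq_one.mp hc with ⟨a, ha⟩
    refine (hfort l).2 v hv ⟨a, ?_, ?_⟩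
    · have : a ∈ nbr G F v l := ha ▸ Finset.mem_singleton_self a
      exact ⟨(mem_nbr.mp this).1, (mem_nbr.mp this).2⟩
    · intro y hy
      have : y ∈ nbr G F v l := mem_nbr.mpr ⟨hy.1, hy.2⟩
      simpa [ha] using this
  · exact h

end Key


section Key2
variable {n k : ℕ} {G : SimpleGraph (Fin n)} {F : Fin k → Finset (Fin n)}
variable (hfort : ∀ i, IsFort G (F i))
variable (hdisj : ∀ i j : Fin k, i ≠ j → Disjoint (F i) (F j))

include hfort in
lemma myA_pattern {v j : Fin n} (hne : v ≠ j) : myA G F v j ≠ 0 ↔ G.Adj v j := by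
  rw [myA]
  rw [if_neg hne]
  by_cases hadj : G.Adj v j
  · rw [dif_pos hadj]
    simp only [hadj, iff_true]
    by_cases h : ∃ l, j ∈ F l ∧ v ∉ F l
    · rw [dif_pos h]
      have hmem : j ∈ nbr G F v h.choose := mem_nbr.mpr ⟨h.choose_spec.1, hadj⟩
      have h2 : 2 ≤ (nbr G F v h.choose).card :=
        card_two hfort h.choose_spec.2 ⟨j, hmem⟩
      split
      · have : (2 : ℝ) ≤ ((nbr G F v h.choose).card : ℝ) := by exact_mod_cast h2
        intro hz
        nlinarith
      · norm_num
    · rw [dif_neg h]; norm_num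
  · rw [dif_neg hadj]
    simp [hadj]

include hdisj in
lemma myA_entry_outside {v j : Fin n} {i : Fin k} (hvF : v ∉ F i) (hjF : j ∈ F i)
    (hadj : G.Adj v j) :
    myA G F v j = if j = (nbr G F v i).min' ⟨j, mem_nbr.mpr ⟨hjF, hadj⟩⟩ then
      -(((nbr G F v i).card : ℝ) - 1) else 1 := by
  have hvj : v ≠ j := G.ne_of_adj hadj
  have h : ∃ l, j ∈ F l ∧ v ∉ F l := ⟨i, hjF, hvF⟩
  rw [myA, if_neg hvj, dif_pos hadj, dif_pos h]
  have hc : h.choose = i := fort_unique hdisj h.choose_spec.1 hjF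
  subst hc
  rfl

include hfort hdisj in
lemma myA_rowsum (i : Fin k) (v : Fin n) : ∑ j ∈ F i, myA G F v j = 0 := by
  by_cases hv : v ∈ F i
  · -- diagonal term cancels count of neighbors in F i
    rw [← Finset.add_sum_erase _ _ hv]
    have hdiag : myA G F v v = -(((nbr G F v i).card : ℝ)) := by
      have hex : ∃ l, v ∈ F l := ⟨i, hv⟩
      rw [myA, if_pos rfl, dif_pos hex]
      have hc : hex.choose = i := fort_unique hdisj hex.choose_spec hv
      rw [hc]
    have hsub : nbr G F v i ⊆ (F i).erase v := by
      intro j hj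
      rcases mem_nbr.mp hj with ⟨h1, h2⟩
      exact Finset.mem_erase.mpr ⟨(G.ne_of_adj h2).symm, h1⟩
    have hzero : ∀ j ∈ (F i).erase v, j ∉ nbr G F v i → myA G F v j = 0 := by
      intro j hj hjn
      have hjF : j ∈ F i := (Finset.mem_erase.mp hj).2
      have hadj : ¬ G.Adj v j := fun ha => hjn (mem_nbr.mpr ⟨hjF, ha⟩)
      have hvj : v ≠ j := fun h => (Finset.mem_erase.mp hj).1 h.symm
      rw [myA, if_neg hvj, dif_neg hadj]
    have hone : ∀ j ∈ nbr G F v i, myA G F v j = 1 := by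
      intro j hj
      rcases mem_nbr.mp hj with ⟨hjF, hadj⟩
      have hvj : v ≠ j := G.ne_of_adj hadj
      have hno : ¬ ∃ l, j ∈ F l ∧ v ∉ F l := by
        rintro ⟨l, hjl, hvl⟩
        exact hvl (fort_unique hdisj hjF hjl ▸ hv)
      rw [myA, if_neg hvj, dif_pos hadj, dif_neg hno]
    rw [← Finset.sum_subset hsub hzero, Finset.sum_congr rfl hone, hdiag]
    simp
  · -- each fort contributes zero: the distinguished neighbor balances the others
    have hsub : nbr G F v i ⊆ F i := fun j hj => (mem_nbr.mp hj).1
    have hzero : ∀ j ∈ F i, j ∉ nbr G F v i → myA G F v j = 0 := by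
      intro j hj hjn
      have hadj : ¬ G.Adj v j := fun ha => hjn (mem_nbr.mpr ⟨hj, ha⟩)
      have hvj : v ≠ j := fun h => hv (h ▸ hj)
      rw [myA, if_neg hvj, dif_neg hadj]
    rw [← Finset.sum_subset hsub hzero]
    rcases Finset.eq_empty_or_nonempty (nbr G F v i) with he | hne
    · rw [he, Finset.sum_empty]
    · have h2 : 2 ≤ (nbr G F v i).card := card_two hfort hv hne
      set m := (nbr G F v i).min' hne with hm
      have hmmem : m ∈ nbr G F v i := Finset.min'_mem _ _
      have hval : ∀ j ∈ nbr G F v i,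
          myA G F v j = if j = m then -(((nbr G F v i).card : ℝ) - 1) else 1 := by
        intro j hj
        rcases mem_nbr.mp hj with ⟨hjF, hadj⟩
        rw [myA_entry_outside hdisj hv hjF hadj]
      rw [Finset.sum_congr rfl hval, ← Finset.add_sum_erase _ _ hmmem, if_pos rfl]
      have hrest : ∀ j ∈ (nbr G F v i).erase m,
          (if j = m then -(((nbr G F v i).card : ℝ) - 1) else 1) = 1 := by
        intro j hj
        rw [if_neg (Finset.mem_erase.mp hj).1]
      rw [Finset.sum_congr rfl hrest, Finset.sum_const, Finset.card_erase_of_mem hmmem]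
      have : (((nbr G F v i).card - 1 : ℕ) : ℝ) = ((nbr G F v i).card : ℝ) - 1 := by
        have : 1 ≤ (nbr G F v i).card := by omega
        push_cast [this]
        ring
      rw [nsmul_eq_mul, this]
      ring

end Key2

section Key3
variable {n k : ℕ} {G : SimpleGraph (Fin n)} {F : Fin k → Finset (Fin n)}

lemma key {G : SimpleGraph (Fin n)} {F : Fin k → Finset (Fin n)}
    (hfort : ∀ i, IsFort G (F i))
    (hdisj : ∀ i j : Fin k, i ≠ j → Disjoint (F i) (F j)) :
    ∃ A : Matrix (Fin n) (Fin n) ℝ,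
      (∀ i j : Fin n, i ≠ j → (A i j ≠ 0 ↔ G.Adj i j)) ∧
      (∀ i : Fin k, A.mulVec (fun j => if j ∈ F i then (1 : ℝ) else 0) = 0) ∧
      k ≤ Module.finrank ℝ (LinearMap.ker (Matrix.mulVecLin A)) := by
  classical
  set x : Fin k → (Fin n → ℝ) := fun i j => if j ∈ F i then (1 : ℝ) else 0 with hxdef
  have hkill : ∀ i : Fin k, (myA G F).mulVec (x i) = 0 := by
    intro i
    funext v
    show ∑ j, myA G F v j * (if j ∈ F i then (1:ℝ) else 0) = 0
    simp only [mul_ite, mul_one, mul_zero]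
    rw [Finset.sum_ite_mem, Finset.univ_inter]
    exact myA_rowsum hfort hdisj i v
  have hx : LinearIndependent ℝ x := by
    rw [Fintype.linearIndependent_iff]
    intro g hg i
    obtain ⟨v, hvi⟩ := (hfort i).1
    have hv := congrFun hg v
    simp only [Finset.sum_apply, Pi.smul_apply, smul_eq_mul, Pi.zero_apply] at hv
    rw [Finset.sum_eq_single i] at hv
    · simpa [hxdef, hvi] using hv
    · intro l _ hl
      have hnotin : v ∉ F l := fun hvl => hl (fort_unique hdisj hvl hvi)
      simp [hxdef, hnotin]
    · simp
  refine ⟨myA G F, fun i j h => myA_pattern hfort h, hkill, ?_⟩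
  have hy : LinearIndependent ℝ
      (fun i : Fin k => (⟨x i, by
        rw [LinearMap.mem_ker, Matrix.mulVecLin_apply]; exact hkill i⟩ :
        LinearMap.ker (Matrix.mulVecLin (myA G F)))) := by
    apply LinearIndependent.of_comp (LinearMap.ker (Matrix.mulVecLin (myA G F))).subtype
    convert hx <;> rfl
  simpa using hy.fintype_card_le_finrank

end Key3

lemma collection_card_le {n : ℕ} {G : SimpleGraph (Fin n)} {𝒞 : Finset (Finset (Fin n))}
    (hforts : ∀ F ∈ 𝒞, IsFort G F) (hpw : (↑𝒞 : Set (Finset (Fin n))).Pairwise Disjoint) :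
    𝒞.card ≤ n := by
  classical
  have hdisj : ∀ x ∈ 𝒞, ∀ y ∈ 𝒞, x ≠ y → Disjoint (id x) (id y) := by
    intro x hx y hy hxy
    exact hpw hx hy hxy
  have h1 : (𝒞.biUnion id).card = ∑ s ∈ 𝒞, s.card := Finset.card_biUnion hdisj
  have h2 : ∑ s ∈ 𝒞, (1 : ℕ) ≤ ∑ s ∈ 𝒞, s.card := by
    apply Finset.sum_le_sum
    intro s hs
    exact Finset.card_pos.mpr (hforts s hs).1
  have h3 : (𝒞.biUnion id).card ≤ n := by
    have := Finset.card_le_card (Finset.subset_univ (𝒞.biUnion id))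
    simpa using this
  calc 𝒞.card = ∑ s ∈ 𝒞, (1:ℕ) := by simp
    _ ≤ ∑ s ∈ 𝒞, s.card := h2
    _ = (𝒞.biUnion id).card := h1.symm
    _ ≤ n := h3


/-- given pairwise disjoint forts `F₁, …, F_k` of a graph `G` on `{1,…,n}`
(`1 ≤ k ≤ n`), there is a real `n × n` matrix `A` whose off-diagonal zero/nonzero pattern
is exactly the adjacency of `G` and which annihilates each incidence vector of the forts;
in particular such an `A` has nullity at least `k`, and hence the maximum nullity over all
(combinatorially symmetric) matrices whose graph is `G` is at least `ft(G)`. -/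
theorem exists_matrix_killing_fort_incidence_vectors {n k : ℕ} (G : SimpleGraph (Fin n))
    (hk1 : 1 ≤ k) (hkn : k ≤ n) (F : Fin k → Finset (Fin n))
    (hfort : ∀ i, IsFort G (F i))
    (hdisj : ∀ i j : Fin k, i ≠ j → Disjoint (F i) (F j)) :
    (∃ A : Matrix (Fin n) (Fin n) ℝ,
      (∀ i j : Fin n, i ≠ j → (A i j ≠ 0 ↔ G.Adj i j)) ∧
      (∀ i : Fin k, A.mulVec (fun j => if j ∈ F i then (1 : ℝ) else 0) = 0) ∧
      k ≤ Module.finrank ℝ (LinearMap.ker A.mulVecLin)) ∧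
    fortNumber G ≤ sSup {d | ∃ A : Matrix (Fin n) (Fin n) ℝ,
      (∀ i j : Fin n, i ≠ j → (A i j ≠ 0 ↔ G.Adj i j)) ∧
      d = Module.finrank ℝ (LinearMap.ker A.mulVecLin)} := by
  classical
  constructor
  · exact key hfort hdisj
  · set D := {d | ∃ A : Matrix (Fin n) (Fin n) ℝ,
      (∀ i j : Fin n, i ≠ j → (A i j ≠ 0 ↔ G.Adj i j)) ∧
      d = Module.finrank ℝ (LinearMap.ker A.mulVecLin)} with hD
    have hDbdd : BddAbove D := by
      refine ⟨n, ?_⟩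
      rintro d ⟨A, -, rfl⟩
      calc Module.finrank ℝ (LinearMap.ker A.mulVecLin)
          ≤ Module.finrank ℝ (Fin n → ℝ) := Submodule.finrank_le _
        _ = n := by simp [Module.finrank_pi]
    set S1 := {m | ∃ 𝒞 : Finset (Finset (Fin n)), (∀ F ∈ 𝒞, IsFort G F) ∧
      (↑𝒞 : Set (Finset (Fin n))).Pairwise Disjoint ∧ 𝒞.card = m} with hS1
    have hS1ne : S1.Nonempty := ⟨0, ∅, by simp, by simp, rfl⟩
    have hS1bdd : BddAbove S1 := by
      refine ⟨n, ?_⟩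
      rintro m ⟨𝒞, hforts, hpw, rfl⟩
      exact collection_card_le hforts hpw
    have hmem : sSup S1 ∈ S1 := Nat.sSup_mem hS1ne hS1bdd
    obtain ⟨𝒞, hforts, hpw, hcard⟩ := hmem
    set m := sSup S1 with hm
    -- enumerate the collection
    have e : Fin m ≃ {x // x ∈ 𝒞} := (𝒞.equivFin.trans (finCongr hcard)).symm
    set F' : Fin m → Finset (Fin n) := fun i => (e i : Finset (Fin n)) with hF'
    have hfort' : ∀ i, IsFort G (F' i) := fun i => hforts _ (e i).2
    have hdisj' : ∀ i j : Fin m, i ≠ j → Disjoint (F' i) (F' j) := by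
      intro i j hij
      have hne : F' i ≠ F' j := by
        intro h
        exact hij (e.injective (Subtype.ext h))
      exact hpw (e i).2 (e j).2 hne
    obtain ⟨A, hpat, -, hrank⟩ := key hfort' hdisj'
    have hdmem : Module.finrank ℝ (LinearMap.ker A.mulVecLin) ∈ D := ⟨A, hpat, rfl⟩
    calc fortNumber G = m := rfl
      _ ≤ Module.finrank ℝ (LinearMap.ker A.mulVecLin) := hrank
      _ ≤ sSup D := le_csSup hDbdd hdmem
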